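/- For every i in {0,...,m-1} and every u in A_i, it holds that B_i ⊆ N(u) ⊆ B[i-2,i+2]. -/

import Mathlib

open SimpleGraph

/-- `c` is a hole (induced cycle on at least 5 vertices) in `G`:
the images of consecutive indices are adjacent, and these are the only adjacencies. -/
def IsHoleEmb {V : Type*} (G : SimpleGraph V) (n : ℕ) (c : ZMod n → V) : Prop :=
  5 ≤ n ∧ Function.Injective c ∧
    ∀ i j : ZMod n, G.Adj (c i) (c j) ↔ (j = i + 1 ∨ i = j + 1)

/-- The triangle `K₃`. -/
def graphK3 : SimpleGraph (Fin 3) := ⊤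

/-- `T₂`: the star `K_{1,3}` with every edge subdivided once. -/
def graphT2 : SimpleGraph (Fin 7) :=
  SimpleGraph.fromRel (fun i j =>
    (i, j) ∈ [((0 : Fin 7), (1 : Fin 7)), (0, 2), (0, 3), (1, 4), (2, 5), (3, 6)])

/-- `X₂`: a 4-cycle `0 1 2 3` with pendant vertices `4, 5, 6` attached at `0, 1, 2`. -/
def graphX2 : SimpleGraph (Fin 7) :=
  SimpleGraph.fromRel (fun i j =>
    (i, j) ∈ [((0 : Fin 7), (1 : Fin 7)), (1, 2), (2, 3), (3, 0), (0, 4), (1, 5), (2, 6)])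

/-- `X₃`: a path `0 1 2 3 4`, a vertex `5` adjacent to `0, 2, 4`, and a pendant `6` at `5`. -/
def graphX3 : SimpleGraph (Fin 7) :=
  SimpleGraph.fromRel (fun i j =>
    (i, j) ∈ [((0 : Fin 7), (1 : Fin 7)), (1, 2), (2, 3), (3, 4), (5, 0), (5, 2), (5, 4), (5, 6)])

/-- The cycle `C_n` on `ZMod n`. -/
def cycleG (n : ℕ) : SimpleGraph (ZMod n) :=
  SimpleGraph.fromRel (fun i j => j = i + 1)

/-- `G` contains an induced copy of `H`. -/
def ContainsInduced {W V : Type*} (H : SimpleGraph W) (G : SimpleGraph V) : Prop :=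
  Nonempty (H ↪g G)

/-- An almost bipartite permutation graph: no induced `K₃`, `T₂`, `X₂`, `X₃`,
nor `C_k` for `k ∈ {5,…,9}`. -/
def AlmostBPG {V : Type*} (G : SimpleGraph V) : Prop :=
  ¬ ContainsInduced graphK3 G ∧ ¬ ContainsInduced graphT2 G ∧
    ¬ ContainsInduced graphX2 G ∧ ¬ ContainsInduced graphX3 G ∧
    ∀ k : ℕ, 5 ≤ k → k ≤ 9 → ¬ ContainsInduced (cycleG k) G

/-- `c` is a shortest hole in `G`. -/
def ShortestHole {V : Type*} (G : SimpleGraph V) (m : ℕ) (c : ZMod m → V) : Prop :=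
  IsHoleEmb G m c ∧ ∀ (n : ℕ) (c' : ZMod n → V), IsHoleEmb G n c' → m ≤ n

/-- `A_i = {v : N(v) ∩ C = {c_{i-1}, c_{i+1}}}`. -/
def Ai {V : Type*} (G : SimpleGraph V) (m : ℕ) (c : ZMod m → V) (i : ZMod m) : Set V :=
  {v | G.neighborSet v ∩ Set.range c = {c (i - 1), c (i + 1)}}

/-- `B_i = {v : N(v) ∩ C = {c_i}}`. -/
def Bi {V : Type*} (G : SimpleGraph V) (m : ℕ) (c : ZMod m → V) (i : ZMod m) : Set V :=
  {v | G.neighborSet v ∩ Set.range c = {c i}}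

/-- `A[i,j] = A_i ∪ B_{i+1} ∪ A_{i+2} ∪ …` for integers `i ≤ j`. -/
def Ablk {V : Type*} (G : SimpleGraph V) (m : ℕ) (c : ZMod m → V) (i j : ℤ) : Set V :=
  {v | ∃ k : ℤ, i ≤ k ∧ k ≤ j ∧
    ((Even (k - i) ∧ v ∈ Ai G m c (k : ZMod m)) ∨ (Odd (k - i) ∧ v ∈ Bi G m c (k : ZMod m)))}

/-- `B[i,j] = B_i ∪ A_{i+1} ∪ B_{i+2} ∪ …` for integers `i ≤ j`. -/
def Bblk {V : Type*} (G : SimpleGraph V) (m : ℕ) (c : ZMod m → V) (i j : ℤ) : Set V :=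
  {v | ∃ k : ℤ, i ≤ k ∧ k ≤ j ∧
    ((Even (k - i) ∧ v ∈ Bi G m c (k : ZMod m)) ∨ (Odd (k - i) ∧ v ∈ Ai G m c (k : ZMod m)))}

/-- `V[i,j] = A[i,j] ∪ B[i,j]`. -/
def Vblk {V : Type*} (G : SimpleGraph V) (m : ℕ) (c : ZMod m → V) (i j : ℤ) : Set V :=
  Ablk G m c i j ∪ Bblk G m c i j

/-- The relation `<_{A_i}`. -/
def ltA {V : Type*} (G : SimpleGraph V) (m : ℕ) (c : ZMod m → V) (i : ZMod m)
    (u u' : V) : Prop :=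
  (∃ w ∈ Bi G m c (i - 2) ∪ Ai G m c (i - 1), G.Adj w u ∧ ¬ G.Adj w u') ∨
  (∃ w ∈ Ai G m c (i + 1) ∪ Bi G m c (i + 2), G.Adj w u' ∧ ¬ G.Adj w u)

/-- The relation `<_{B_i}`. -/
def ltB {V : Type*} (G : SimpleGraph V) (m : ℕ) (c : ZMod m → V) (i : ZMod m)
    (w w' : V) : Prop :=
  (∃ u ∈ Ai G m c (i - 2) ∪ Bi G m c (i - 1), G.Adj u w ∧ ¬ G.Adj u w') ∨
  (∃ u ∈ Bi G m c (i + 1) ∪ Ai G m c (i + 2), G.Adj u w' ∧ ¬ G.Adj u w)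

/-- `r` is a strict linear order on the set `S`. -/
def IsStrictLinearOrderOn {V : Type*} (S : Set V) (r : V → V → Prop) : Prop :=
  (∀ a ∈ S, ¬ r a a) ∧
    (∀ a ∈ S, ∀ b ∈ S, ∀ d ∈ S, r a b → r b d → r a d) ∧
    (∀ a ∈ S, ∀ b ∈ S, a ≠ b → r a b ∨ r b a)

/-- `L` extends `r` on the set `S`. -/
def ExtendsOn {V : Type*} (S : Set V) (r L : V → V → Prop) : Prop :=
  ∀ a ∈ S, ∀ b ∈ S, r a b → L a b

/-- `v` is the maximum of `(S, L)`. -/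
def IsMaxOf {V : Type*} (S : Set V) (L : V → V → Prop) (v : V) : Prop :=
  v ∈ S ∧ ∀ z ∈ S, z ≠ v → L z v

/-- `v` is the minimum of `(S, L)`. -/
def IsMinOf {V : Type*} (S : Set V) (L : V → V → Prop) (v : V) : Prop :=
  v ∈ S ∧ ∀ z ∈ S, z ≠ v → L v z

/-- `v, v'` belong to `S`, `L v v'`, and they are consecutive in `(S, L)`. -/
def ConsecIn {V : Type*} (S : Set V) (L : V → V → Prop) (v v' : V) : Prop :=
  v ∈ S ∧ v' ∈ S ∧ L v v' ∧ ¬ ∃ z ∈ S, L v z ∧ L z v'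

/-- The relation `≺` built from the chosen linear orders `LA i` on `A_i` and `LB i` on `B_i`. -/
def precRel {V : Type*} (G : SimpleGraph V) (m : ℕ) (c : ZMod m → V)
    (LA LB : ZMod m → V → V → Prop) (v v' : V) : Prop :=
  ∃ i : ZMod m,
    ConsecIn (Ai G m c i) (LA i) v v' ∨
    ConsecIn (Bi G m c i) (LB i) v v' ∨
    (IsMaxOf (Ai G m c i) (LA i) v ∧ IsMinOf (Bi G m c (i + 1)) (LB (i + 1)) v') ∨
    (IsMaxOf (Bi G m c i) (LB i) v ∧ IsMinOf (Ai G m c (i + 1)) (LA (i + 1)) v')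

/-- `<_{V'}`: the transitive closure of `≺` restricted to `V'`. -/
def ltOn {V : Type*} (G : SimpleGraph V) (m : ℕ) (c : ZMod m → V)
    (LA LB : ZMod m → V → V → Prop) (V' : Set V) : V → V → Prop :=
  Relation.TransGen (fun a b => a ∈ V' ∧ b ∈ V' ∧ precRel G m c LA LB a b)

/-- The relation `<_cl`. -/
def ltCl {V : Type*} (G : SimpleGraph V) (m : ℕ) (c : ZMod m → V)
    (LA LB : ZMod m → V → V → Prop) (v v' : V) : Prop :=
  ∃ i : ℕ, i < m ∧
    ((v ∈ Ablk G m c ((i : ℤ) - 2) ((i : ℤ) + 2) ∧ v' ∈ Ablk G m c ((i : ℤ) - 2) ((i : ℤ) + 2) ∧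
        ltOn G m c LA LB (Ablk G m c ((i : ℤ) - 2) ((i : ℤ) + 2)) v v') ∨
      (v ∈ Bblk G m c ((i : ℤ) - 2) ((i : ℤ) + 2) ∧ v' ∈ Bblk G m c ((i : ℤ) - 2) ((i : ℤ) + 2) ∧
        ltOn G m c LA LB (Bblk G m c ((i : ℤ) - 2) ((i : ℤ) + 2)) v v'))

/-- `r` is a transitive orientation of `G`. -/
def IsTransOrient {V : Type*} (G : SimpleGraph V) (r : V → V → Prop) : Prop :=
  (∀ v, ¬ r v v) ∧ (∀ a b d, r a b → r b d → r a d) ∧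
    ∀ u v, u ≠ v → ((r u v ∨ r v u) ↔ G.Adj u v)

/-- A permutation graph: both `G` and its complement admit transitive orientations. -/
def IsPermGraph {V : Type*} (G : SimpleGraph V) : Prop :=
  (∃ r, IsTransOrient G r) ∧ ∃ r, IsTransOrient Gᶜ r

/-- A bipartite permutation graph. -/
def IsBPG {V : Type*} (G : SimpleGraph V) : Prop :=
  G.Colorable 2 ∧ IsPermGraph G

/-- `X` is a hole cut of `G`: `G - X` is a bipartite permutation graph. -/
def IsHoleCut {V : Type*} (G : SimpleGraph V) (X : Set V) : Prop :=
  IsBPG (G.induce Xᶜ)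

/-- The adjacency property: for every `u ∈ U`, `N(u)` consists of vertices
consecutive in `(W, r)`. -/
def AdjProperty {V : Type*} (G : SimpleGraph V) (U W : Set V) (r : V → V → Prop) : Prop :=
  ∀ u ∈ U, ∀ w ∈ W, ∀ w' ∈ W, ∀ w'' ∈ W,
    r w w' → r w' w'' → G.Adj u w → G.Adj u w'' → G.Adj u w'

/-- The enclosure property: for `u, u' ∈ U` with `N(u) ⊆ N(u')`, the set `N(u') \ N(u)`
consists of vertices consecutive in `(W, r)`. -/
def EncProperty {V : Type*} (G : SimpleGraph V) (U W : Set V) (r : V → V → Prop) : Prop :=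
  ∀ u ∈ U, ∀ u' ∈ U, G.neighborSet u ∩ W ⊆ G.neighborSet u' ∩ W →
    ∀ w ∈ W, ∀ w' ∈ W, ∀ w'' ∈ W, r w w' → r w' w'' →
      (G.Adj u' w ∧ ¬ G.Adj u w) → (G.Adj u' w'' ∧ ¬ G.Adj u w'') →
        (G.Adj u' w' ∧ ¬ G.Adj u w')

/-- `(U, rU)` and `(W, rW)` form a strong ordering of `U ∪ W`. -/
def StrongOrdering {V : Type*} (G : SimpleGraph V) (U W : Set V)
    (rU rW : V → V → Prop) : Prop :=
  ∀ u ∈ U, ∀ u' ∈ U, ∀ w ∈ W, ∀ w' ∈ W,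
    G.Adj u w' → G.Adj u' w → rU u u' → rW w w' → G.Adj u w ∧ G.Adj u' w'

/-- `S` induces in `G` one of the graphs `K₃, T₂, X₂, X₃, C₅, …, C₉`. -/
def IsForbiddenSet {V : Type*} (G : SimpleGraph V) (S : Set V) : Prop :=
  Nonempty (graphK3 ≃g G.induce S) ∨ Nonempty (graphT2 ≃g G.induce S) ∨
    Nonempty (graphX2 ≃g G.induce S) ∨ Nonempty (graphX3 ≃g G.induce S) ∨
    ∃ k : ℕ, 5 ≤ k ∧ k ≤ 9 ∧ Nonempty (cycleG k ≃g G.induce S)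


section AuxLemmas

instance : DecidableRel graphX2.Adj := fun a b =>
  decidable_of_iff' _ (SimpleGraph.fromRel_adj _ a b)
instance : DecidableRel graphX3.Adj := fun a b =>
  decidable_of_iff' _ (SimpleGraph.fromRel_adj _ a b)

lemma noK3 {V : Type*} {G : SimpleGraph V} (h : ¬ ContainsInduced graphK3 G)
    {x y z : V} (hxy : G.Adj x y) (hxz : G.Adj x z) (hyz : G.Adj y z) : False := by
  classical
  apply h
  have ne01 : x ≠ y := hxy.ne
  have ne02 : x ≠ z := hxz.ne
  have ne12 : y ≠ z := hyz.ne
  have e10 := hxy.symm; have e20 := hxz.symm; have e21 := hyz.symm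
  have ne10 := ne01.symm; have ne20 := ne02.symm; have ne21 := ne12.symm
  refine ⟨⟨⟨![x, y, z], ?_⟩, @fun a b => ?_⟩⟩
  · intro a b hab
    fin_cases a <;> fin_cases b <;>
      simp only [Matrix.cons_val_zero, Matrix.cons_val_one, Matrix.head_cons,
        Matrix.cons_val_two, Matrix.tail_cons] at hab ⊢ <;>
      first
        | rfl
        | exact absurd hab (by assumption)
  · show G.Adj _ _ ↔ graphK3.Adj a b
    have hK : ∀ a b : Fin 3, graphK3.Adj a b ↔ a ≠ b := fun a b => Iff.rfl
    fin_cases a <;> fin_cases b <;>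
      simp only [Matrix.cons_val_zero, Matrix.cons_val_one, Matrix.head_cons,
        Matrix.cons_val_two, Matrix.tail_cons, hK] <;>
      first
        | exact iff_of_true (by assumption) (by decide)
        | exact iff_of_false (by first | assumption | exact G.loopless.irrefl _) (by decide)

set_option maxHeartbeats 1000000 in
lemma X2_false {V : Type*} {G : SimpleGraph V} (hX : ¬ ContainsInduced graphX2 G)
    {v0 v1 v2 v3 v4 v5 v6 : V}
    (e01 : G.Adj v0 v1) (e12 : G.Adj v1 v2) (e23 : G.Adj v2 v3) (e03 : G.Adj v0 v3)
    (e04 : G.Adj v0 v4) (e15 : G.Adj v1 v5) (e26 : G.Adj v2 v6)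
    (n02 : ¬ G.Adj v0 v2) (n13 : ¬ G.Adj v1 v3) (n05 : ¬ G.Adj v0 v5)
    (n06 : ¬ G.Adj v0 v6) (n14 : ¬ G.Adj v1 v4) (n16 : ¬ G.Adj v1 v6)
    (n24 : ¬ G.Adj v2 v4) (n25 : ¬ G.Adj v2 v5) (n34 : ¬ G.Adj v3 v4)
    (n35 : ¬ G.Adj v3 v5) (n36 : ¬ G.Adj v3 v6) (n45 : ¬ G.Adj v4 v5)
    (n46 : ¬ G.Adj v4 v6) (n56 : ¬ G.Adj v5 v6) : False := by
  classical
  have e10 := e01.symm; have e21 := e12.symm; have e32 := e23.symm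
  have e30 := e03.symm; have e40 := e04.symm; have e51 := e15.symm; have e62 := e26.symm
  have n20 : ¬ G.Adj v2 v0 := fun h => n02 h.symm
  have n31 : ¬ G.Adj v3 v1 := fun h => n13 h.symm
  have n50 : ¬ G.Adj v5 v0 := fun h => n05 h.symm
  have n60 : ¬ G.Adj v6 v0 := fun h => n06 h.symm
  have n41 : ¬ G.Adj v4 v1 := fun h => n14 h.symm
  have n61 : ¬ G.Adj v6 v1 := fun h => n16 h.symm
  have n42 : ¬ G.Adj v4 v2 := fun h => n24 h.symm
  have n52 : ¬ G.Adj v5 v2 := fun h => n25 h.symm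
  have n43 : ¬ G.Adj v4 v3 := fun h => n34 h.symm
  have n53 : ¬ G.Adj v5 v3 := fun h => n35 h.symm
  have n63 : ¬ G.Adj v6 v3 := fun h => n36 h.symm
  have n54 : ¬ G.Adj v5 v4 := fun h => n45 h.symm
  have n64 : ¬ G.Adj v6 v4 := fun h => n46 h.symm
  have n65 : ¬ G.Adj v6 v5 := fun h => n56 h.symm
  have nea : ∀ {x y z : V}, G.Adj x z → ¬ G.Adj y z → x ≠ y :=
    fun hx hy h => hy (h ▸ hx)
  have ne01 : v0 ≠ v1 := e01.ne
  have ne12 : v1 ≠ v2 := e12.ne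
  have ne23 : v2 ≠ v3 := e23.ne
  have ne03 : v0 ≠ v3 := e03.ne
  have ne04 : v0 ≠ v4 := e04.ne
  have ne15 : v1 ≠ v5 := e15.ne
  have ne26 : v2 ≠ v6 := e26.ne
  have ne02 : v0 ≠ v2 := nea e04 n24
  have ne13 : v1 ≠ v3 := nea e15 n35
  have ne05 : v0 ≠ v5 := nea e03 n53
  have ne06 : v0 ≠ v6 := nea e03 n63
  have ne14 : v1 ≠ v4 := nea e12 n42
  have ne16 : v1 ≠ v6 := nea e10 n60
  have ne24 : v2 ≠ v4 := nea e21 n41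
  have ne25 : v2 ≠ v5 := nea e23 n53
  have ne34 : v3 ≠ v4 := nea e32 n42
  have ne35 : v3 ≠ v5 := nea e32 n52
  have ne36 : v3 ≠ v6 := nea e30 n60
  have ne45 : v4 ≠ v5 := nea e40 n50
  have ne46 : v4 ≠ v6 := nea e40 n60
  have ne56 : v5 ≠ v6 := nea e51 n61
  apply hX
  refine ⟨⟨⟨![v0,v1,v2,v3,v4,v5,v6], ?_⟩, @fun a b => ?_⟩⟩
  · intro a b hab
    fin_cases a <;> fin_cases b <;>
      simp only [Matrix.cons_val_zero, Matrix.cons_val_one, Matrix.head_cons,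
        Matrix.cons_val_two, Matrix.tail_cons, Matrix.cons_val_three,
        Matrix.cons_val_four, Matrix.cons_val_succ] at hab ⊢ <;>
      first
        | rfl
        | exact absurd hab (by assumption)
        | exact absurd hab.symm (by assumption)
  · fin_cases a <;> fin_cases b <;>
      simp only [Matrix.cons_val_zero, Matrix.cons_val_one, Matrix.head_cons,
        Matrix.cons_val_two, Matrix.tail_cons, Matrix.cons_val_three,
        Matrix.cons_val_four, Matrix.cons_val_succ] <;>
      first
        | exact iff_of_true (by assumption) (by decide)
        | exact iff_of_false (by first | assumption | exact G.loopless.irrefl _) (by decide)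
set_option maxHeartbeats 1000000 in
lemma X3_false {V : Type*} {G : SimpleGraph V} (hX : ¬ ContainsInduced graphX3 G)
    {v0 v1 v2 v3 v4 v5 v6 : V}
    (e01 : G.Adj v0 v1) (e12 : G.Adj v1 v2) (e23 : G.Adj v2 v3) (e34 : G.Adj v3 v4)
    (e50 : G.Adj v5 v0) (e52 : G.Adj v5 v2) (e54 : G.Adj v5 v4) (e56 : G.Adj v5 v6)
    (n02 : ¬ G.Adj v0 v2) (n03 : ¬ G.Adj v0 v3) (n04 : ¬ G.Adj v0 v4)
    (n06 : ¬ G.Adj v0 v6) (n13 : ¬ G.Adj v1 v3) (n14 : ¬ G.Adj v1 v4)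
    (n15 : ¬ G.Adj v1 v5) (n16 : ¬ G.Adj v1 v6) (n24 : ¬ G.Adj v2 v4)
    (n26 : ¬ G.Adj v2 v6) (n35 : ¬ G.Adj v3 v5) (n36 : ¬ G.Adj v3 v6)
    (n46 : ¬ G.Adj v4 v6) : False := by
  classical
  have e10 := e01.symm; have e21 := e12.symm; have e32 := e23.symm
  have e43 := e34.symm; have e05 := e50.symm; have e25 := e52.symm
  have e45 := e54.symm; have e65 := e56.symm
  have n20 : ¬ G.Adj v2 v0 := fun h => n02 h.symm
  have n30 : ¬ G.Adj v3 v0 := fun h => n03 h.symm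
  have n40 : ¬ G.Adj v4 v0 := fun h => n04 h.symm
  have n60 : ¬ G.Adj v6 v0 := fun h => n06 h.symm
  have n31 : ¬ G.Adj v3 v1 := fun h => n13 h.symm
  have n41 : ¬ G.Adj v4 v1 := fun h => n14 h.symm
  have n51 : ¬ G.Adj v5 v1 := fun h => n15 h.symm
  have n61 : ¬ G.Adj v6 v1 := fun h => n16 h.symm
  have n42 : ¬ G.Adj v4 v2 := fun h => n24 h.symm
  have n62 : ¬ G.Adj v6 v2 := fun h => n26 h.symm
  have n53 : ¬ G.Adj v5 v3 := fun h => n35 h.symm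
  have n63 : ¬ G.Adj v6 v3 := fun h => n36 h.symm
  have n64 : ¬ G.Adj v6 v4 := fun h => n46 h.symm
  have nea : ∀ {x y z : V}, G.Adj x z → ¬ G.Adj y z → x ≠ y :=
    fun hx hy h => hy (h ▸ hx)
  have ne01 : v0 ≠ v1 := e01.ne
  have ne12 : v1 ≠ v2 := e12.ne
  have ne23 : v2 ≠ v3 := e23.ne
  have ne34 : v3 ≠ v4 := e34.ne
  have ne05 : v0 ≠ v5 := e05.ne
  have ne25 : v2 ≠ v5 := e25.ne
  have ne45 : v4 ≠ v5 := e45.ne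
  have ne56 : v5 ≠ v6 := e56.ne
  have ne02 : v0 ≠ v2 := (nea e23 n03).symm
  have ne03 : v0 ≠ v3 := (nea e34 n04).symm
  have ne04 : v0 ≠ v4 := nea e01 n41
  have ne06 : v0 ≠ v6 := nea e01 n61
  have ne13 : v1 ≠ v3 := nea e10 n30
  have ne14 : v1 ≠ v4 := nea e10 n40
  have ne15 : v1 ≠ v5 := (nea e56 n16).symm
  have ne16 : v1 ≠ v6 := nea e10 n60
  have ne24 : v2 ≠ v4 := nea e21 n41
  have ne26 : v2 ≠ v6 := nea e21 n61
  have ne35 : v3 ≠ v5 := (nea e56 n36).symm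
  have ne36 : v3 ≠ v6 := nea e32 n62
  have ne46 : v4 ≠ v6 := nea e43 n63
  have ne10 := ne01.symm; have ne21 := ne12.symm; have ne32 := ne23.symm
  have ne43 := ne34.symm; have ne50 := ne05.symm; have ne52 := ne25.symm
  have ne54 := ne45.symm; have ne65 := ne56.symm; have ne20 := ne02.symm
  have ne30 := ne03.symm; have ne40 := ne04.symm; have ne60 := ne06.symm
  have ne31 := ne13.symm; have ne41 := ne14.symm; have ne51 := ne15.symm
  have ne61 := ne16.symm; have ne42 := ne24.symm; have ne62 := ne26.symm
  have ne53 := ne35.symm; have ne63 := ne36.symm; have ne64 := ne46.symm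
  apply hX
  refine ⟨⟨⟨![v0,v1,v2,v3,v4,v5,v6], ?_⟩, @fun a b => ?_⟩⟩
  · intro a b hab
    fin_cases a <;> fin_cases b <;>
      simp only [Matrix.cons_val_zero, Matrix.cons_val_one, Matrix.head_cons,
        Matrix.cons_val_two, Matrix.tail_cons, Matrix.cons_val_three,
        Matrix.cons_val_four, Matrix.cons_val_succ] at hab ⊢ <;>
      first
        | rfl
        | exact absurd hab (by assumption)
        | exact absurd hab.symm (by assumption)
  · fin_cases a <;> fin_cases b <;>
      simp only [Matrix.cons_val_zero, Matrix.cons_val_one, Matrix.head_cons,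
        Matrix.cons_val_two, Matrix.tail_cons, Matrix.cons_val_three,
        Matrix.cons_val_four, Matrix.cons_val_succ] <;>
      first
        | exact iff_of_true (by assumption) (by decide)
        | exact iff_of_false (by first | assumption | exact G.loopless.irrefl _) (by decide)
lemma no_small_cycle {V : Type*} {G : SimpleGraph V} (hG : AlmostBPG G)
    {m : ℕ} {c : ZMod m → V} (hC : ShortestHole G m c)
    (k : ℕ) (h5 : 5 ≤ k) (hkm : k < m) (f : ZMod k → V)
    (hinj : Function.Injective f)
    (hadj : ∀ x y : ZMod k, G.Adj (f x) (f y) ↔ (y = x + 1 ∨ x = y + 1)) : False := by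
  by_cases h9 : k ≤ 9
  · apply hG.2.2.2.2 k h5 h9
    refine ⟨⟨⟨f, hinj⟩, @fun a b => ?_⟩⟩
    show G.Adj _ _ ↔ (cycleG k).Adj a b
    rw [show (cycleG k).Adj a b ↔ a ≠ b ∧ (b = a + 1 ∨ a = b + 1) from
      SimpleGraph.fromRel_adj _ a b]
    constructor
    · intro h0
      refine ⟨?_, (hadj a b).1 h0⟩
      rintro rfl
      exact G.loopless.irrefl _ h0
    · rintro ⟨-, h⟩
      exact (hadj a b).2 h
  · have := hC.2 k f ⟨h5, hinj, hadj⟩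
    omega

lemma cycle_one {V : Type*} {G : SimpleGraph V} (hG : AlmostBPG G)
    {m : ℕ} {c : ZMod m → V} (hC : ShortestHole G m c)
    (L : ℕ) (hL : 3 ≤ L) (hLm : L + 2 < m) (w : ℕ → V) (v : V)
    (hpath : ∀ t, t < L → G.Adj (w t) (w (t+1)))
    (hchord : ∀ t t', t + 2 ≤ t' → t' ≤ L → ¬ G.Adj (w t) (w t'))
    (hwinj : ∀ t t', t ≤ L → t' ≤ L → w t = w t' → t = t')
    (hv0 : G.Adj v (w 0)) (hvL : G.Adj v (w L))
    (hvno : ∀ t, 1 ≤ t → t < L → ¬ G.Adj v (w t))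
    (hvne : ∀ t, t ≤ L → v ≠ w t) : False := by
  classical
  haveI : NeZero (L + 2) := ⟨by omega⟩
  haveI : Fact (1 < L + 2) := ⟨by omega⟩
  set g : ℕ → V := fun n => if n = 0 then v else w (n - 1) with hg
  have hg0 : g 0 = v := by simp [hg]
  have hgn : ∀ n, 1 ≤ n → g n = w (n - 1) := by
    intro n hn
    simp only [hg]
    rw [if_neg (by omega : ¬ (n = 0))]
  have hwadj : ∀ s t, s ≤ L → t ≤ L → (G.Adj (w s) (w t) ↔ (t = s + 1 ∨ s = t + 1)) := by
    intro s t hs ht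
    constructor
    · intro h
      by_contra hcc
      push_neg at hcc
      rcases Nat.lt_trichotomy s t with h1 | h1 | h1
      · exact hchord s t (by omega) ht h
      · exact G.loopless.irrefl _ (h1 ▸ h)
      · exact hchord t s (by omega) hs h.symm
    · rintro (rfl | rfl)
      · exact hpath s (by omega)
      · exact (hpath t (by omega)).symm
  have hmod : ∀ x : ℕ, x < L + 2 → (x + 1) % (L + 2) = if x + 1 = L + 2 then 0 else x + 1 := by
    intro x hx; split
    · next h => rw [h, Nat.mod_self]
    · exact Nat.mod_eq_of_lt (by omega)
  have hgadj2 : ∀ a b : ℕ, a ≤ b → a < L + 2 → b < L + 2 →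
      (G.Adj (g a) (g b) ↔ (b = (a+1) % (L+2) ∨ a = (b+1) % (L+2))) := by
    intro a b hab ha hb
    rw [hmod a ha, hmod b hb]
    rcases Nat.eq_zero_or_pos a with rfl | ha1
    · rcases Nat.eq_zero_or_pos b with rfl | hb1
      · rw [hg0]
        exact iff_of_false (G.loopless.irrefl _) (by split_ifs <;> first | omega | (simp <;> omega))
      · rw [hg0, hgn b (by omega)]
        by_cases hb2 : b = 1
        · rw [show b - 1 = 0 from by omega]
          exact iff_of_true hv0 (by split_ifs <;> first | omega | (simp <;> omega))
        · by_cases hb3 : b = L + 1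
          · rw [show b - 1 = L from by omega]
            exact iff_of_true hvL (by split_ifs <;> first | omega | (simp <;> omega))
          · exact iff_of_false (hvno (b-1) (by omega) (by omega)) (by split_ifs <;> first | omega | (simp <;> omega))
    · rw [hgn a (by omega), hgn b (by omega),
        hwadj (a-1) (b-1) (by omega) (by omega)]
      split_ifs <;> first | omega | (simp <;> omega)
  have hgadj : ∀ a b : ℕ, a < L + 2 → b < L + 2 →
      (G.Adj (g a) (g b) ↔ (b = (a+1) % (L+2) ∨ a = (b+1) % (L+2))) := by
    intro a b ha hb
    rcases le_total a b with h | h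
    · exact hgadj2 a b h ha hb
    · rw [SimpleGraph.adj_comm]
      exact (hgadj2 b a h hb ha).trans or_comm
  have hginj : ∀ a b : ℕ, a < L + 2 → b < L + 2 → g a = g b → a = b := by
    intro a b ha hb h
    rcases Nat.eq_zero_or_pos a with rfl | ha1 <;> rcases Nat.eq_zero_or_pos b with rfl | hb1
    · rfl
    · rw [hg0, hgn b (by omega)] at h
      exact absurd h (hvne (b-1) (by omega))
    · rw [hg0, hgn a (by omega)] at h
      exact absurd h.symm (hvne (a-1) (by omega))
    · rw [hgn a (by omega), hgn b (by omega)] at h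
      have := hwinj (a-1) (b-1) (by omega) (by omega) h
      omega
  have hbridge : ∀ x y : ZMod (L + 2), (y = x + 1) ↔ (y.val = (x.val + 1) % (L + 2)) := by
    intro x y
    constructor
    · rintro rfl
      rw [ZMod.val_add, ZMod.val_one]
    · intro h
      apply ZMod.val_injective
      rw [h, ZMod.val_add, ZMod.val_one]
  refine no_small_cycle hG hC (L + 2) ?_ ?_ (fun x => g x.val) ?_ ?_
  · omega
  · omega
  · intro x y h
    exact ZMod.val_injective (L+2) (hginj x.val y.val (ZMod.val_lt x) (ZMod.val_lt y) h)
  · intro x y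
    rw [hgadj x.val y.val (ZMod.val_lt x) (ZMod.val_lt y), hbridge x y, hbridge y x]

lemma cycle_two {V : Type*} {G : SimpleGraph V} (hG : AlmostBPG G)
    {m : ℕ} {c : ZMod m → V} (hC : ShortestHole G m c)
    (L : ℕ) (hL : 2 ≤ L) (hLm : L + 3 < m) (w : ℕ → V) (u v : V)
    (hpath : ∀ t, t < L → G.Adj (w t) (w (t+1)))
    (hchord : ∀ t t', t + 2 ≤ t' → t' ≤ L → ¬ G.Adj (w t) (w t'))
    (hwinj : ∀ t t', t ≤ L → t' ≤ L → w t = w t' → t = t')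
    (huv : G.Adj u v)
    (hv0 : G.Adj v (w 0))
    (hvno : ∀ t, 1 ≤ t → t ≤ L → ¬ G.Adj v (w t))
    (huL : G.Adj u (w L))
    (huno : ∀ t, t < L → ¬ G.Adj u (w t))
    (hune : ∀ t, t ≤ L → u ≠ w t)
    (hvne : ∀ t, t ≤ L → v ≠ w t) : False := by
  classical
  haveI : NeZero (L + 3) := ⟨by omega⟩
  haveI : Fact (1 < L + 3) := ⟨by omega⟩
  set g : ℕ → V := fun n => if n = 0 then u else if n = 1 then v else w (n - 2) with hg
  have hg0 : g 0 = u := by simp [hg]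
  have hg1 : g 1 = v := by simp [hg]
  have hgn : ∀ n, 2 ≤ n → g n = w (n - 2) := by
    intro n hn
    simp only [hg]
    rw [if_neg (by omega : ¬ (n = 0)), if_neg (by omega : ¬ (n = 1))]
  have hwadj : ∀ s t, s ≤ L → t ≤ L → (G.Adj (w s) (w t) ↔ (t = s + 1 ∨ s = t + 1)) := by
    intro s t hs ht
    constructor
    · intro h
      by_contra hcc
      push_neg at hcc
      rcases Nat.lt_trichotomy s t with h1 | h1 | h1
      · exact hchord s t (by omega) ht h
      · exact G.loopless.irrefl _ (h1 ▸ h)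
      · exact hchord t s (by omega) hs h.symm
    · rintro (rfl | rfl)
      · exact hpath s (by omega)
      · exact (hpath t (by omega)).symm
  have hmod : ∀ x : ℕ, x < L + 3 → (x + 1) % (L + 3) = if x + 1 = L + 3 then 0 else x + 1 := by
    intro x hx; split
    · next h => rw [h, Nat.mod_self]
    · exact Nat.mod_eq_of_lt (by omega)
  have hgadj2 : ∀ a b : ℕ, a ≤ b → a < L + 3 → b < L + 3 →
      (G.Adj (g a) (g b) ↔ (b = (a+1) % (L+3) ∨ a = (b+1) % (L+3))) := by
    intro a b hab ha hb
    rw [hmod a ha, hmod b hb]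
    rcases Nat.eq_zero_or_pos a with rfl | ha1
    · rcases Nat.eq_zero_or_pos b with rfl | hb1
      · rw [hg0]
        exact iff_of_false (G.loopless.irrefl _) (by split_ifs <;> first | omega | (simp <;> omega))
      · by_cases hb2 : b = 1
        · rw [hg0, hb2, hg1]
          exact iff_of_true huv (by split_ifs <;> first | omega | (simp <;> omega))
        · rw [hg0, hgn b (by omega)]
          by_cases hbL : b = L + 2
          · rw [show b - 2 = L from by omega]
            exact iff_of_true huL (by split_ifs <;> first | omega | (simp <;> omega))
          · exact iff_of_false (huno (b-2) (by omega)) (by split_ifs <;> first | omega | (simp <;> omega))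
    · by_cases ha2 : a = 1
      · by_cases hb2 : b = 1
        · rw [ha2, hb2, hg1]
          exact iff_of_false (G.loopless.irrefl _) (by split_ifs <;> first | omega | (simp <;> omega))
        · rw [ha2, hg1, hgn b (by omega)]
          by_cases hb3 : b = 2
          · rw [show b - 2 = 0 from by omega]
            exact iff_of_true hv0 (by split_ifs <;> first | omega | (simp <;> omega))
          · refine iff_of_false (hvno (b-2) (by omega) (by omega)) ?_
            rw [← ha2]
            split_ifs <;> first | omega | (simp <;> omega)
      · rw [hgn a (by omega), hgn b (by omega),
          hwadj (a-2) (b-2) (by omega) (by omega)]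
        split_ifs <;> first | omega | (simp <;> omega)
  have hgadj : ∀ a b : ℕ, a < L + 3 → b < L + 3 →
      (G.Adj (g a) (g b) ↔ (b = (a+1) % (L+3) ∨ a = (b+1) % (L+3))) := by
    intro a b ha hb
    rcases le_total a b with h | h
    · exact hgadj2 a b h ha hb
    · rw [SimpleGraph.adj_comm]
      exact (hgadj2 b a h hb ha).trans or_comm
  have hginj2 : ∀ a b : ℕ, a ≤ b → a < L + 3 → b < L + 3 → g a = g b → a = b := by
    intro a b hab ha hb h
    rcases Nat.eq_zero_or_pos a with rfl | ha1
    · rcases Nat.eq_zero_or_pos b with rfl | hb1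
      · rfl
      · exfalso
        by_cases hb2 : b = 1
        · rw [hg0, hb2, hg1] at h
          exact huv.ne h
        · rw [hg0, hgn b (by omega)] at h
          exact hune (b-2) (by omega) h
    · by_cases ha2 : a = 1
      · by_cases hb2 : b = 1
        · omega
        · exfalso
          rw [ha2, hg1, hgn b (by omega)] at h
          exact hvne (b-2) (by omega) h
      · rw [hgn a (by omega), hgn b (by omega)] at h
        have := hwinj (a-2) (b-2) (by omega) (by omega) h
        omega
  have hginj : ∀ a b : ℕ, a < L + 3 → b < L + 3 → g a = g b → a = b := by
    intro a b ha hb h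
    rcases le_total a b with hle | hle
    · exact hginj2 a b hle ha hb h
    · exact (hginj2 b a hle hb ha h.symm).symm
  have hbridge : ∀ x y : ZMod (L + 3), (y = x + 1) ↔ (y.val = (x.val + 1) % (L + 3)) := by
    intro x y
    constructor
    · rintro rfl
      rw [ZMod.val_add, ZMod.val_one]
    · intro h
      apply ZMod.val_injective
      rw [h, ZMod.val_add, ZMod.val_one]
  refine no_small_cycle hG hC (L + 3) ?_ ?_ (fun x => g x.val) ?_ ?_
  · omega
  · omega
  · intro x y h
    exact ZMod.val_injective (L+3) (hginj x.val y.val (ZMod.val_lt x) (ZMod.val_lt y) h)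
  · intro x y
    rw [hgadj x.val y.val (ZMod.val_lt x) (ZMod.val_lt y), hbridge x y, hbridge y x]

end AuxLemmas

set_option maxHeartbeats 3000000 in
theorem Ai_neighborhood_containment {V : Type*} (G : SimpleGraph V) (hconn : G.Connected) (hG : AlmostBPG G)
    (m : ℕ) (c : ZMod m → V) (hm : 10 ≤ m) (hC : ShortestHole G m c) :
    ∀ i : ℕ, i < m → ∀ u ∈ Ai G m c (i : ZMod m),
      Bi G m c (i : ZMod m) ⊆ G.neighborSet u ∧
        G.neighborSet u ⊆ Bblk G m c ((i : ℤ) - 2) ((i : ℤ) + 2) := by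
  classical
  haveI : NeZero m := ⟨by omega⟩
  have hcinj : Function.Injective c := hC.1.2.1
  have hadjc : ∀ x y : ZMod m, G.Adj (c x) (c y) ↔ (y = x + 1 ∨ x = y + 1) := hC.1.2.2
  intro i hi u hu
  set D : ℕ → V := fun t => c ((i : ZMod m) + (t : ℕ)) with hD
  have hcast : ∀ a b : ℕ, a < m → b < m → (((a : ZMod m) = (b : ZMod m)) ↔ a = b) := by
    intro a b ha hb
    constructor
    · intro h
      have h2 := congrArg ZMod.val h
      rwa [ZMod.val_cast_of_lt ha, ZMod.val_cast_of_lt hb] at h2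
    · rintro rfl; rfl
  have hm1c : ((m - 1 : ℕ) : ZMod m) = -1 := by
    have h1 : (((m - 1) + 1 : ℕ) : ZMod m) = 0 := by
      rw [show (m - 1) + 1 = m from by omega, ZMod.natCast_self]
    push_cast at h1
    exact eq_neg_of_add_eq_zero_left h1
  have hm2c : ((m - 2 : ℕ) : ZMod m) = -2 := by
    have h1 : (((m - 2) + 2 : ℕ) : ZMod m) = 0 := by
      rw [show (m - 2) + 2 = m from by omega, ZMod.natCast_self]
    push_cast at h1
    exact eq_neg_of_add_eq_zero_left h1
  have hD0' : D 0 = c (i : ZMod m) := by simp only [hD]; norm_num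
  have hD1' : D 1 = c ((i : ZMod m) + 1) := by simp only [hD]; norm_num
  have hD2' : D 2 = c ((i : ZMod m) + 2) := by simp only [hD]; norm_num
  have hDm1' : D (m - 1) = c ((i : ZMod m) - 1) := by
    simp only [hD]
    exact congrArg c (by rw [hm1c]; ring)
  have hDm2' : D (m - 2) = c ((i : ZMod m) - 2) := by
    simp only [hD]
    exact congrArg c (by rw [hm2c]; ring)
  have hDadj : ∀ a b : ℕ, a < m → b < m →
      (G.Adj (D a) (D b) ↔
        (b = a + 1 ∨ a = b + 1 ∨ (a = 0 ∧ b = m - 1) ∨ (b = 0 ∧ a = m - 1))) := by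
    intro a b ha hb
    simp only [hD]
    rw [hadjc]
    have e1 : ((i : ZMod m) + (b:ℕ) = (i : ZMod m) + (a:ℕ) + 1) ↔
        ((b : ZMod m) = ((a+1 : ℕ) : ZMod m)) := by
      rw [add_assoc]
      push_cast
      exact add_right_inj _
    have e2 : ((i : ZMod m) + (a:ℕ) = (i : ZMod m) + (b:ℕ) + 1) ↔
        ((a : ZMod m) = ((b+1 : ℕ) : ZMod m)) := by
      rw [add_assoc]
      push_cast
      exact add_right_inj _
    rw [e1, e2]
    by_cases ham : a + 1 = m
    · rw [show ((a+1 : ℕ) : ZMod m) = ((0:ℕ) : ZMod m) from by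
        rw [ham, ZMod.natCast_self, Nat.cast_zero], hcast b 0 hb (by omega)]
      by_cases hbm : b + 1 = m
      · rw [show ((b+1 : ℕ) : ZMod m) = ((0:ℕ) : ZMod m) from by
          rw [hbm, ZMod.natCast_self, Nat.cast_zero], hcast a 0 ha (by omega)]
        omega
      · rw [hcast a (b+1) ha (by omega)]
        omega
    · rw [hcast b (a+1) hb (by omega)]
      by_cases hbm : b + 1 = m
      · rw [show ((b+1 : ℕ) : ZMod m) = ((0:ℕ) : ZMod m) from by
          rw [hbm, ZMod.natCast_self, Nat.cast_zero], hcast a 0 ha (by omega)]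
        omega
      · rw [hcast a (b+1) ha (by omega)]
        omega
  have hDeq : ∀ a b : ℕ, a < m → b < m → (D a = D b ↔ a = b) := by
    intro a b ha hb
    constructor
    · intro h
      simp only [hD] at h
      have h2 := hcinj h
      rw [add_right_inj] at h2
      exact (hcast a b ha hb).1 h2
    · rintro rfl; rfl
  have hrange : ∀ x, x ∈ Set.range c → ∃ t, t < m ∧ x = D t := by
    rintro x ⟨j, rfl⟩
    refine ⟨(j - (i : ZMod m)).val, ZMod.val_lt _, ?_⟩
    simp only [hD]
    rw [ZMod.natCast_rightInverse (j - (i : ZMod m))]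
    exact congrArg c (by ring)
  have hDrange : ∀ t : ℕ, D t ∈ Set.range c := by
    intro t
    exact ⟨(i : ZMod m) + t, by simp only [hD]⟩
  have hu' : G.neighborSet u ∩ Set.range c = {c ((i : ZMod m) - 1), c ((i : ZMod m) + 1)} := hu
  have huadj : ∀ t, t < m → (G.Adj u (D t) ↔ (t = 1 ∨ t = m - 1)) := by
    intro t ht
    constructor
    · intro h
      have hx : D t ∈ G.neighborSet u ∩ Set.range c := ⟨h, hDrange t⟩
      rw [hu'] at hx
      rcases hx with hx | hx
      · rw [← hDm1'] at hx
        have := (hDeq t (m-1) ht (by omega)).1 hx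
        omega
      · rw [Set.mem_singleton_iff, ← hD1'] at hx
        have := (hDeq t 1 ht (by omega)).1 hx
        omega
    · intro ht'
      have hx : D t ∈ ({c ((i : ZMod m) - 1), c ((i : ZMod m) + 1)} : Set V) := by
        rcases ht' with rfl | rfl
        · rw [hD1']
          right; rfl
        · rw [hDm1']
          left; rfl
      rw [← hu'] at hx
      exact hx.1
  have huD : ∀ s, 1 ≤ s → s < m → u ≠ D s := by
    intro s h1 h2 heq
    by_cases hsm : s = m - 1
    · subst hsm
      have hadj0 : G.Adj (D (m-1)) (D 0) := (hDadj (m-1) 0 (by omega) (by omega)).2 (by omega)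
      have h3 : G.Adj u (D 0) := by rw [heq]; exact hadj0
      have := (huadj 0 (by omega)).1 h3
      omega
    · have hadjp : G.Adj (D s) (D (s+1)) := (hDadj s (s+1) h2 (by omega)).2 (by omega)
      have h3 := (huadj (s+1) (by omega)).1 (by rw [heq]; exact hadjp)
      have hadjm : G.Adj (D s) (D (s-1)) := (hDadj s (s-1) h2 (by omega)).2 (by omega)
      have h4 := (huadj (s-1) (by omega)).1 (by rw [heq]; exact hadjm)
      omega
  have htri : ∀ {x y z : V}, G.Adj x y → G.Adj x z → G.Adj y z → False :=
    fun hxy hxz hyz => noK3 hG.1 hxy hxz hyz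
  constructor
  -- PART 1 : Bi ⊆ N(u)
  · intro w hw
    have hw' : G.neighborSet w ∩ Set.range c = {c (i : ZMod m)} := hw
    have hwadjD : ∀ t, t < m → (G.Adj w (D t) ↔ t = 0) := by
      intro t ht
      constructor
      · intro h
        have hx : D t ∈ G.neighborSet w ∩ Set.range c := ⟨h, hDrange t⟩
        rw [hw', Set.mem_singleton_iff, ← hD0'] at hx
        exact (hDeq t 0 ht (by omega)).1 hx
      · rintro rfl
        have hx : c (i : ZMod m) ∈ G.neighborSet w ∩ Set.range c := by
          rw [hw']; rfl
        rw [hD0']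
        exact hx.1
    rw [SimpleGraph.mem_neighborSet]
    by_contra hnadj
    exact X2_false hG.2.2.1
      ((hDadj (m-1) 0 (by omega) (by omega)).2 (by omega))
      ((hDadj 0 1 (by omega) (by omega)).2 (by omega))
      (((huadj 1 (by omega)).2 (by omega)).symm)
      (((huadj (m-1) (by omega)).2 (by omega)).symm)
      ((hDadj (m-1) (m-2) (by omega) (by omega)).2 (by omega))
      (((hwadjD 0 (by omega)).2 rfl).symm)
      ((hDadj 1 2 (by omega) (by omega)).2 (by omega))
      (fun h => by have := (hDadj (m-1) 1 (by omega) (by omega)).1 h; omega)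
      (fun h => by have := (huadj 0 (by omega)).1 h.symm; omega)
      (fun h => by have := (hwadjD (m-1) (by omega)).1 h.symm; omega)
      (fun h => by have := (hDadj (m-1) 2 (by omega) (by omega)).1 h; omega)
      (fun h => by have := (hDadj 0 (m-2) (by omega) (by omega)).1 h; omega)
      (fun h => by have := (hDadj 0 2 (by omega) (by omega)).1 h; omega)
      (fun h => by have := (hDadj 1 (m-2) (by omega) (by omega)).1 h; omega)
      (fun h => by have := (hwadjD 1 (by omega)).1 h.symm; omega)
      (fun h => by have := (huadj (m-2) (by omega)).1 h; omega)
      hnadj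
      (fun h => by have := (huadj 2 (by omega)).1 h; omega)
      (fun h => by have := (hwadjD (m-2) (by omega)).1 h.symm; omega)
      (fun h => by have := (hDadj (m-2) 2 (by omega) (by omega)).1 h; omega)
      (fun h => by have := (hwadjD 2 (by omega)).1 h; omega)
  -- PART 2 : N(u) ⊆ B[i-2, i+2]
  · intro v hv
    rw [SimpleGraph.mem_neighborSet] at hv
    have hAmem : ∀ J : ZMod m, c J ∈ Ai G m c J := by
      intro J
      show G.neighborSet (c J) ∩ Set.range c = {c (J - 1), c (J + 1)}
      ext x
      simp only [Set.mem_inter_iff, Set.mem_insert_iff, Set.mem_singleton_iff]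
      constructor
      · rintro ⟨hx1, j', rfl⟩
        rw [SimpleGraph.mem_neighborSet, hadjc] at hx1
        rcases hx1 with h | h
        · right; exact congrArg c h
        · left
          exact congrArg c (eq_sub_of_add_eq h.symm)
      · rintro (rfl | rfl)
        · refine ⟨?_, ⟨J - 1, rfl⟩⟩
          rw [SimpleGraph.mem_neighborSet, hadjc]
          right; ring
        · refine ⟨?_, ⟨J + 1, rfl⟩⟩
          rw [SimpleGraph.mem_neighborSet, hadjc]
          left; rfl
    by_cases hvc : v ∈ Set.range c
    · obtain ⟨j, rfl⟩ := hvc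
      have hx : c j ∈ G.neighborSet u ∩ Set.range c := ⟨hv, j, rfl⟩
      rw [hu', Set.mem_insert_iff, Set.mem_singleton_iff] at hx
      rcases hx with hx | hx
      · have hj : j = (i : ZMod m) - 1 := hcinj hx
        subst hj
        refine ⟨(i : ℤ) - 1, by omega, by omega, Or.inr ⟨⟨0, by ring⟩, ?_⟩⟩
        rw [show (((i : ℤ) - 1 : ℤ) : ZMod m) = (i : ZMod m) - 1 from by push_cast; ring]
        exact hAmem _
      · have hj : j = (i : ZMod m) + 1 := hcinj hx
        subst hj
        refine ⟨(i : ℤ) + 1, by omega, by omega, Or.inr ⟨⟨1, by ring⟩, ?_⟩⟩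
        rw [show (((i : ℤ) + 1 : ℤ) : ZMod m) = (i : ZMod m) + 1 from by push_cast; ring]
        exact hAmem _
    · have hvne : ∀ t : ℕ, v ≠ D t := fun t h => hvc (h ▸ hDrange t)
      have hQ1 : ¬ G.Adj v (D 1) := fun h =>
        htri hv ((huadj 1 (by omega)).2 (by omega)) h
      have hQm1 : ¬ G.Adj v (D (m-1)) := fun h =>
        htri hv ((huadj (m-1) (by omega)).2 (by omega)) h
      have mingap : ∀ q d : ℕ, 1 ≤ q → 1 ≤ d → q + d ≤ m - 2 →
          G.Adj v (D q) → G.Adj v (D (q + d)) →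
          (∀ d', 1 ≤ d' → d' < d → ¬ G.Adj v (D (q + d'))) → d = 2 := by
        intro q d hq hd hqd hQq hQd hmin'
        by_contra hne2
        rcases Nat.lt_or_ge d 2 with hd2 | hd2
        · have hd1 : d = 1 := by omega
          subst hd1
          exact htri hQq hQd ((hDadj q (q+1) (by omega) (by omega)).2 (by omega))
        · have hd3 : 3 ≤ d := by omega
          refine cycle_one hG hC d hd3 (by omega) (fun t => D (q + t)) v ?_ ?_ ?_ ?_ ?_ ?_ ?_
          · intro t ht
            exact (hDadj (q+t) (q+(t+1)) (by omega) (by omega)).2 (by omega)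
          · intro t t' htt ht' h
            have := (hDadj (q+t) (q+t') (by omega) (by omega)).1 h
            omega
          · intro t t' ht ht' h
            have := (hDeq (q+t) (q+t') (by omega) (by omega)).1 h
            omega
          · exact hQq
          · exact hQd
          · intro t h1 h2
            exact hmin' t h1 h2
          · intro t ht
            exact hvne (q+t)
      have hfar : ∀ e, 3 ≤ e → e ≤ m - 3 → ¬ G.Adj v (D e) := by
        by_contra hcon
        push_neg at hcon
        obtain ⟨e0, he3, hem, hQe0⟩ := hcon
        have hex : ∃ e, 1 ≤ e ∧ e ≤ m - 3 ∧ G.Adj v (D e) := ⟨e0, by omega, hem, hQe0⟩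
        obtain ⟨he1, hem', hQe'⟩ := Nat.find_spec hex
        have hminx : ∀ e'', e'' < Nat.find hex → ¬(1 ≤ e'' ∧ e'' ≤ m - 3 ∧ G.Adj v (D e'')) :=
          fun e'' h => Nat.find_min hex h
        have he2 : Nat.find hex ≠ 1 := fun h => hQ1 (by rw [← h]; exact hQe')
        by_cases he3' : 3 ≤ Nat.find hex
        · refine cycle_two hG hC (Nat.find hex - 1) (by omega) (by omega)
            (fun t => D (Nat.find hex - t)) u v ?_ ?_ ?_ hv ?_ ?_ ?_ ?_ ?_ ?_
          · intro t ht
            exact (hDadj (Nat.find hex - t) (Nat.find hex - (t+1)) (by omega) (by omega)).2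
              (by omega)
          · intro t t' htt ht' h
            have := (hDadj (Nat.find hex - t) (Nat.find hex - t') (by omega) (by omega)).1 h
            omega
          · intro t t' ht ht' h
            have := (hDeq (Nat.find hex - t) (Nat.find hex - t') (by omega) (by omega)).1 h
            omega
          · exact hQe'
          · intro t h1 h2 h
            exact hminx (Nat.find hex - t) (by omega) ⟨by omega, by omega, h⟩
          · show G.Adj u (D (Nat.find hex - (Nat.find hex - 1)))
            rw [show Nat.find hex - (Nat.find hex - 1) = 1 from by omega]
            exact (huadj 1 (by omega)).2 (by omega)
          · intro t ht h
            have := (huadj (Nat.find hex - t) (by omega)).1 h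
            omega
          · intro t ht
            exact huD (Nat.find hex - t) (by omega) (by omega)
          · intro t ht
            exact hvne _
        · have he'2 : Nat.find hex = 2 := by omega
          have hQ2 : G.Adj v (D 2) := by rw [← he'2]; exact hQe'
          have hex2 : ∃ d, 1 ≤ d ∧ 2 + d ≤ m - 2 ∧ G.Adj v (D (2 + d)) :=
            ⟨e0 - 2, by omega, by omega, by rw [show 2 + (e0-2) = e0 from by omega]; exact hQe0⟩
          obtain ⟨hd1, hd2, hQd⟩ := Nat.find_spec hex2
          have hd1min : ∀ d', d' < Nat.find hex2 → ¬(1 ≤ d' ∧ 2 + d' ≤ m - 2 ∧ G.Adj v (D (2+d'))) :=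
            fun d' h => Nat.find_min hex2 h
          have hd1eq : Nat.find hex2 = 2 :=
            mingap 2 (Nat.find hex2) (by omega) hd1 hd2 hQ2 hQd
              (fun d' h1 h2 h => hd1min d' h2 ⟨h1, by omega, h⟩)
          have hQ4 : G.Adj v (D 4) := by
            rw [show (4:ℕ) = 2 + Nat.find hex2 from by omega]
            exact hQd
          have hQ3 : ¬ G.Adj v (D 3) := fun h =>
            hd1min 1 (by omega) ⟨le_refl 1, by omega, h⟩
          have hno5 : ∀ e, 5 ≤ e → e ≤ m - 2 → ¬ G.Adj v (D e) := by
            by_contra hcon2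
            push_neg at hcon2
            obtain ⟨e1, he51, he52, hQe1⟩ := hcon2
            have hex3 : ∃ d, 1 ≤ d ∧ 4 + d ≤ m - 2 ∧ G.Adj v (D (4 + d)) :=
              ⟨e1 - 4, by omega, by omega, by rw [show 4 + (e1-4) = e1 from by omega]; exact hQe1⟩
            obtain ⟨hg1, hg2, hQg⟩ := Nat.find_spec hex3
            have hd2min : ∀ d', d' < Nat.find hex3 → ¬(1 ≤ d' ∧ 4 + d' ≤ m - 2 ∧ G.Adj v (D (4+d'))) :=
              fun d' h => Nat.find_min hex3 h
            have hd2eq : Nat.find hex3 = 2 :=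
              mingap 4 (Nat.find hex3) (by omega) hg1 hg2 hQ4 hQg
                (fun d' h1 h2 h => hd2min d' h2 ⟨h1, by omega, h⟩)
            have hQ6 : G.Adj v (D 6) := by
              rw [show (6:ℕ) = 4 + Nat.find hex3 from by omega]
              exact hQg
            have hQ5 : ¬ G.Adj v (D 5) := fun h =>
              hd2min 1 (by omega) ⟨le_refl 1, by omega, h⟩
            exact X3_false hG.2.2.2.1
              ((hDadj 2 3 (by omega) (by omega)).2 (by omega))
              ((hDadj 3 4 (by omega) (by omega)).2 (by omega))
              ((hDadj 4 5 (by omega) (by omega)).2 (by omega))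
              ((hDadj 5 6 (by omega) (by omega)).2 (by omega))
              hQ2 hQ4 hQ6 hv.symm
              (fun h => by have := (hDadj 2 4 (by omega) (by omega)).1 h; omega)
              (fun h => by have := (hDadj 2 5 (by omega) (by omega)).1 h; omega)
              (fun h => by have := (hDadj 2 6 (by omega) (by omega)).1 h; omega)
              (fun h => by have := (huadj 2 (by omega)).1 h.symm; omega)
              (fun h => by have := (hDadj 3 5 (by omega) (by omega)).1 h; omega)
              (fun h => by have := (hDadj 3 6 (by omega) (by omega)).1 h; omega)
              (fun h => hQ3 h.symm)
              (fun h => by have := (huadj 3 (by omega)).1 h.symm; omega)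
              (fun h => by have := (hDadj 4 6 (by omega) (by omega)).1 h; omega)
              (fun h => by have := (huadj 4 (by omega)).1 h.symm; omega)
              (fun h => hQ5 h.symm)
              (fun h => by have := (huadj 5 (by omega)).1 h.symm; omega)
              (fun h => by have := (huadj 6 (by omega)).1 h.symm; omega)
          refine cycle_two hG hC (m - 5) (by omega) (by omega)
            (fun t => D (4 + t)) u v ?_ ?_ ?_ hv ?_ ?_ ?_ ?_ ?_ ?_
          · intro t ht
            exact (hDadj (4+t) (4+(t+1)) (by omega) (by omega)).2 (by omega)
          · intro t t' htt ht' h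
            have := (hDadj (4+t) (4+t') (by omega) (by omega)).1 h
            omega
          · intro t t' ht ht' h
            have := (hDeq (4+t) (4+t') (by omega) (by omega)).1 h
            omega
          · exact hQ4
          · intro t h1 h2 h
            by_cases hs : 4 + t = m - 1
            · exact hQm1 (by rw [← hs]; exact h)
            · exact hno5 (4+t) (by omega) (by omega) h
          · show G.Adj u (D (4 + (m - 5)))
            rw [show 4 + (m - 5) = m - 1 from by omega]
            exact (huadj (m-1) (by omega)).2 (by omega)
          · intro t ht h
            have := (huadj (4+t) (by omega)).1 h
            omega
          · intro t ht
            exact huD (4+t) (by omega) (by omega)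
          · intro t ht
            exact hvne _
      have hb2 : ¬(G.Adj v (D 2) ∧ G.Adj v (D (m-2))) := by
        rintro ⟨h2, hm2'⟩
        refine cycle_one hG hC (m - 4) (by omega) (by omega) (fun t => D (2 + t)) v
          ?_ ?_ ?_ ?_ ?_ ?_ ?_
        · intro t ht
          exact (hDadj (2+t) (2+(t+1)) (by omega) (by omega)).2 (by omega)
        · intro t t' htt ht' h
          have := (hDadj (2+t) (2+t') (by omega) (by omega)).1 h
          omega
        · intro t t' ht ht' h
          have := (hDeq (2+t) (2+t') (by omega) (by omega)).1 h
          omega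
        · exact h2
        · show G.Adj v (D (2 + (m - 4)))
          rw [show 2 + (m - 4) = m - 2 from by omega]
          exact hm2'
        · intro t h1 h2'
          exact hfar (2+t) (by omega) (by omega)
        · intro t ht
          exact hvne _
      have hc3 : G.Adj v (D 0) ∨ G.Adj v (D 2) ∨ G.Adj v (D (m-2)) := by
        by_contra hcon
        push_neg at hcon
        obtain ⟨h0', h2', hm2''⟩ := hcon
        exact X2_false hG.2.2.1
          (((huadj (m-1) (by omega)).2 (by omega)).symm)
          ((huadj 1 (by omega)).2 (by omega))
          ((hDadj 1 0 (by omega) (by omega)).2 (by omega))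
          ((hDadj (m-1) 0 (by omega) (by omega)).2 (by omega))
          ((hDadj (m-1) (m-2) (by omega) (by omega)).2 (by omega))
          hv
          ((hDadj 1 2 (by omega) (by omega)).2 (by omega))
          (fun h => by have := (hDadj (m-1) 1 (by omega) (by omega)).1 h; omega)
          (fun h => by have := (huadj 0 (by omega)).1 h; omega)
          (fun h => hQm1 h.symm)
          (fun h => by have := (hDadj (m-1) 2 (by omega) (by omega)).1 h; omega)
          (fun h => by have := (huadj (m-2) (by omega)).1 h; omega)
          (fun h => by have := (huadj 2 (by omega)).1 h; omega)
          (fun h => by have := (hDadj 1 (m-2) (by omega) (by omega)).1 h; omega)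
          (fun h => hQ1 h.symm)
          (fun h => by have := (hDadj 0 (m-2) (by omega) (by omega)).1 h; omega)
          (fun h => h0' h.symm)
          (fun h => by have := (hDadj 0 2 (by omega) (by omega)).1 h; omega)
          (fun h => hm2'' h.symm)
          (fun h => by have := (hDadj (m-2) 2 (by omega) (by omega)).1 h; omega)
          h2'
      have hclassify : ∀ t, t < m → G.Adj v (D t) → (t = 0 ∨ t = 2 ∨ t = m - 2) := by
        intro t ht hQt
        by_contra hno
        push_neg at hno
        obtain ⟨h0, h2, hm2'⟩ := hno
        rcases (by omega : t = 1 ∨ t = m - 1 ∨ (3 ≤ t ∧ t ≤ m - 3)) with h | h | h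
        · rw [h] at hQt; exact hQ1 hQt
        · rw [h] at hQt; exact hQm1 hQt
        · exact hfar t h.1 h.2 hQt
      have eqset1 : ∀ t : ℕ, G.Adj v (D t) →
          (∀ s, s < m → G.Adj v (D s) → s = t) →
          G.neighborSet v ∩ Set.range c = {D t} := by
        intro t hQt huniq
        ext x
        simp only [Set.mem_inter_iff, Set.mem_singleton_iff]
        constructor
        · rintro ⟨hx1, hx2⟩
          obtain ⟨s, hs, rfl⟩ := hrange x hx2
          rw [huniq s hs hx1]
        · rintro rfl
          exact ⟨hQt, hDrange t⟩
      have eqset2 : ∀ t t' : ℕ, G.Adj v (D t) → G.Adj v (D t') →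
          (∀ s, s < m → G.Adj v (D s) → s = t ∨ s = t') →
          G.neighborSet v ∩ Set.range c = {D t, D t'} := by
        intro t t' hQt hQt' huniq
        ext x
        simp only [Set.mem_inter_iff, Set.mem_insert_iff, Set.mem_singleton_iff]
        constructor
        · rintro ⟨hx1, hx2⟩
          obtain ⟨s, hs, rfl⟩ := hrange x hx2
          rcases huniq s hs hx1 with h | h
          · left; rw [h]
          · right; rw [h]
        · rintro (rfl | rfl)
          · exact ⟨hQt, hDrange t⟩
          · exact ⟨hQt', hDrange t'⟩
      by_cases hQ0 : G.Adj v (D 0) <;> by_cases hQ2 : G.Adj v (D 2) <;>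
        by_cases hQm2 : G.Adj v (D (m-2))
      · exact absurd ⟨hQ2, hQm2⟩ hb2
      · -- Q0, Q2, ¬Qm2 : v ∈ A_{i+1}
        refine ⟨(i : ℤ) + 1, by omega, by omega, Or.inr ⟨⟨1, by ring⟩, ?_⟩⟩
        rw [show (((i : ℤ) + 1 : ℤ) : ZMod m) = (i : ZMod m) + 1 from by push_cast; ring]
        show G.neighborSet v ∩ Set.range c = {c ((i:ZMod m) + 1 - 1), c ((i:ZMod m) + 1 + 1)}
        rw [show (i:ZMod m) + 1 - 1 = (i:ZMod m) from by ring,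
          show (i:ZMod m) + 1 + 1 = (i:ZMod m) + 2 from by ring, ← hD0', ← hD2']
        refine eqset2 0 2 hQ0 hQ2 ?_
        intro s hs hQs
        rcases hclassify s hs hQs with h | h | h
        · left; exact h
        · right; exact h
        · exfalso; rw [h] at hQs; exact hQm2 hQs
      · -- Q0, ¬Q2, Qm2 : v ∈ A_{i-1}
        refine ⟨(i : ℤ) - 1, by omega, by omega, Or.inr ⟨⟨0, by ring⟩, ?_⟩⟩
        rw [show (((i : ℤ) - 1 : ℤ) : ZMod m) = (i : ZMod m) - 1 from by push_cast; ring]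
        show G.neighborSet v ∩ Set.range c = {c ((i:ZMod m) - 1 - 1), c ((i:ZMod m) - 1 + 1)}
        rw [show (i:ZMod m) - 1 - 1 = (i:ZMod m) - 2 from by ring,
          show (i:ZMod m) - 1 + 1 = (i:ZMod m) from by ring, ← hDm2', ← hD0']
        refine eqset2 (m-2) 0 hQm2 hQ0 ?_
        intro s hs hQs
        rcases hclassify s hs hQs with h | h | h
        · right; exact h
        · exfalso; rw [h] at hQs; exact hQ2 hQs
        · left; exact h
      · -- Q0, ¬Q2, ¬Qm2 : v ∈ B_i
        refine ⟨(i : ℤ), by omega, by omega, Or.inl ⟨⟨1, by ring⟩, ?_⟩⟩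
        rw [show (((i : ℤ) : ℤ)) = (i : ℤ) from rfl,
          show (((i : ℤ)) : ZMod m) = (i : ZMod m) from by push_cast; ring]
        show G.neighborSet v ∩ Set.range c = {c (i:ZMod m)}
        rw [← hD0']
        refine eqset1 0 hQ0 ?_
        intro s hs hQs
        rcases hclassify s hs hQs with h | h | h
        · exact h
        · exfalso; rw [h] at hQs; exact hQ2 hQs
        · exfalso; rw [h] at hQs; exact hQm2 hQs
      · exact absurd ⟨hQ2, hQm2⟩ hb2
      · -- ¬Q0, Q2, ¬Qm2 : v ∈ B_{i+2}
        refine ⟨(i : ℤ) + 2, by omega, by omega, Or.inl ⟨⟨2, by ring⟩, ?_⟩⟩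
        rw [show (((i : ℤ) + 2 : ℤ) : ZMod m) = (i : ZMod m) + 2 from by push_cast; ring]
        show G.neighborSet v ∩ Set.range c = {c ((i:ZMod m) + 2)}
        rw [← hD2']
        refine eqset1 2 hQ2 ?_
        intro s hs hQs
        rcases hclassify s hs hQs with h | h | h
        · exfalso; rw [h] at hQs; exact hQ0 hQs
        · exact h
        · exfalso; rw [h] at hQs; exact hQm2 hQs
      · -- ¬Q0, ¬Q2, Qm2 : v ∈ B_{i-2}
        refine ⟨(i : ℤ) - 2, by omega, by omega, Or.inl ⟨⟨0, by ring⟩, ?_⟩⟩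
        rw [show (((i : ℤ) - 2 : ℤ) : ZMod m) = (i : ZMod m) - 2 from by push_cast; ring]
        show G.neighborSet v ∩ Set.range c = {c ((i:ZMod m) - 2)}
        rw [← hDm2']
        refine eqset1 (m-2) hQm2 ?_
        intro s hs hQs
        rcases hclassify s hs hQs with h | h | h
        · exfalso; rw [h] at hQs; exact hQ0 hQs
        · exfalso; rw [h] at hQs; exact hQ2 hQs
        · exact h
      · rcases hc3 with h | h | h <;> contradiction
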